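/- In any generalized grid graph, for every reachable vertex v there exists a minimum-weight directed path from (0,0) to v along which non-potent vertices appear only after all potent vertices; that is, the path consists of an initial segment of potent vertices (nonempty, since (0,0) is potent) followed by a possibly empty final segment of non-potent vertices. -/

import Mathlib

namespace Stmt2

/-- Total weight of a list of vertices regarded as a walk. -/
def pathCost {V : Type*} (wt : V → V → ℕ) : List V → ℕ
  | [] => 0
  | [_] => 0
  | a :: b :: l => wt a b + pathCost wt (b :: l)

/-- `l` is a directed path (walk) from `s` to `v` in the graph with edge relation `E`. -/
def IsPath {V : Type*} (E : V → V → Prop) (s v : V) (l : List V) : Prop :=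
  l.head? = some s ∧ l.getLast? = some v ∧ l.Chain' E

/-- Shortest-path cost from `s` to `v`. -/
noncomputable def cost {V : Type*} (E : V → V → Prop) (wt : V → V → ℕ) (s v : V) : ℕ :=
  sInf { c | ∃ l : List V, IsPath E s v l ∧ pathCost wt l = c }

/-- Vertices of a generalized grid graph with rows `[0..N]` and diagonals `[-t..t]`. -/
def ggVertex (N t : ℕ) (v : ℤ × ℤ) : Prop :=
  0 ≤ v.1 ∧ v.1 ≤ (N : ℤ) ∧ -(t : ℤ) ≤ v.2 ∧ v.2 ≤ (t : ℤ)

/-- Edges of a generalized grid graph: deletion edges `(i,d) → (i+1,d-1)`,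
insertion edges `(i,d) → (i,d+1)`, vertical edges `(i,d) → (i+1,d)`;
present only when both endpoints are vertices. -/
def ggEdge (N t : ℕ) (u v : ℤ × ℤ) : Prop :=
  ggVertex N t u ∧ ggVertex N t v ∧
    (v = (u.1 + 1, u.2 - 1) ∨ v = (u.1, u.2 + 1) ∨ v = (u.1 + 1, u.2))

/-- Weights: a vertical edge `(i,d) → (i+1,d)` has weight `w (i+1) d`;
deletion and insertion edges have weight `1`. -/
def ggWt (w : ℤ → ℤ → ℕ) (u v : ℤ × ℤ) : ℕ :=
  if v = (u.1 + 1, u.2) then w v.1 v.2 else 1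

/-- A vertex `(i,d)` is reachable if `i + d ≥ 0`. -/
def Reachable (N t : ℕ) (v : ℤ × ℤ) : Prop := ggVertex N t v ∧ 0 ≤ v.1 + v.2

/-- Shortest-path cost `c(i,d)` from `(0,0)` in the generalized grid graph. -/
noncomputable def ggCost (N t : ℕ) (w : ℤ → ℤ → ℕ) (v : ℤ × ℤ) : ℕ :=
  cost (ggEdge N t) (ggWt w) (0, 0) v

/-- `(i,d)` is dominated by `(i,d-1)`. -/
def DomL (N t : ℕ) (w : ℤ → ℤ → ℕ) (v : ℤ × ℤ) : Prop :=
  Reachable N t v ∧ Reachable N t (v.1, v.2 - 1) ∧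
    ggCost N t w (v.1, v.2 - 1) + 1 = ggCost N t w v

/-- `(i,d)` is dominated by `(i-1,d+1)`. -/
def DomU (N t : ℕ) (w : ℤ → ℤ → ℕ) (v : ℤ × ℤ) : Prop :=
  Reachable N t v ∧ Reachable N t (v.1 - 1, v.2 + 1) ∧
    ggCost N t w (v.1 - 1, v.2 + 1) + 1 = ggCost N t w v

/-- Potency, defined by (well-founded, hence unambiguous) recursion in
lexicographic order: `(i,d)` is potent iff (dominated by `(i,d-1)` implies
`(i,d-1)` potent and `w (i+1) (d-1) = 1`) and (dominated by `(i-1,d+1)` implies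
`(i-1,d+1)` potent and `w i (d+1) = 1`). -/
inductive Potent (N t : ℕ) (w : ℤ → ℤ → ℕ) : ℤ × ℤ → Prop where
  | mk : ∀ v : ℤ × ℤ,
      (DomL N t w v → Potent N t w (v.1, v.2 - 1)) →
      (DomL N t w v → w (v.1 + 1) (v.2 - 1) = 1) →
      (DomU N t w v → Potent N t w (v.1 - 1, v.2 + 1)) →
      (DomU N t w v → w v.1 (v.2 + 1) = 1) →
      Potent N t w v

section Proofs

variable {N t : ℕ} {w : ℤ → ℤ → ℕ}

lemma pathCost_concat {V : Type*} (wt : V → V → ℕ) :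
    ∀ (l : List V) (u b : V), l.getLast? = some u →
      pathCost wt (l ++ [b]) = pathCost wt l + wt u b
  | [], u, b, h => by simp at h
  | [a], u, b, h => by
      simp only [List.getLast?_singleton, Option.some.injEq] at h
      subst h
      simp [pathCost]
  | a :: c :: l, u, b, h => by
      rw [List.getLast?_cons_cons] at h
      have ih := pathCost_concat wt (c :: l) u b h
      simp only [List.cons_append, List.append_eq, pathCost] at ih ⊢
      omega

lemma isPath_concat {V : Type*} {E : V → V → Prop} {s u : V} {l : List V}
    (h : IsPath E s u l) {v : V} (he : E u v) : IsPath E s v (l ++ [v]) := by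
  obtain ⟨h1, h2, h3⟩ := h
  have hne : l ≠ [] := by rintro rfl; simp at h1
  refine ⟨?_, ?_, ?_⟩
  · rw [List.head?_append_of_ne_nil _ hne]; exact h1
  · simp
  · refine List.isChain_append.2 ⟨h3, List.isChain_singleton v, ?_⟩
    intro x hx y hy
    rw [h2] at hx
    simp only [Option.mem_def, Option.some.injEq, List.head?_cons] at hx hy
    subst hx; subst hy; exact he

lemma cost_le_path {V : Type*} {E : V → V → Prop} (wt : V → V → ℕ) {s v : V} {l : List V}
    (h : IsPath E s v l) : cost E wt s v ≤ pathCost wt l :=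
  Nat.sInf_le ⟨l, h, rfl⟩

lemma edge_reach {u v : ℤ × ℤ} (he : ggEdge N t u v) (hu : Reachable N t u) :
    Reachable N t v := by
  obtain ⟨_, hv, hc⟩ := he
  obtain ⟨_, hs⟩ := hu
  refine ⟨hv, ?_⟩
  rcases hc with rfl | rfl | rfl <;> simp <;> omega

lemma path_reach :
    ∀ (l : List (ℤ × ℤ)) (a : ℤ × ℤ), l.Chain' (ggEdge N t) → l.head? = some a →
      Reachable N t a → ∀ x ∈ l, Reachable N t x
  | [], a, _, h, _ => by simp at h
  | [b], a, _, h, ha => by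
      simp only [List.head?_cons, Option.some.injEq] at h
      subst h; simpa using ha
  | b :: c :: l, a, hch, h, ha => by
      simp only [List.head?_cons, Option.some.injEq] at h
      subst h
      change List.IsChain _ _ at hch; rw [List.isChain_cons_cons] at hch
      have hc : Reachable N t c := edge_reach hch.1 ha
      intro x hx
      rcases List.mem_cons.mp hx with rfl | hx
      · exact ha
      · exact path_reach (c :: l) c hch.2 rfl hc x hx

lemma exists_path_aux :
    ∀ n : ℕ, ∀ v : ℤ × ℤ, Reachable N t v → (3 * v.1 + v.2).toNat ≤ n →
      ∃ l, IsPath (ggEdge N t) ((0 : ℤ), (0 : ℤ)) v l := by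
  intro n
  induction n with
  | zero =>
      intro v hv hb
      obtain ⟨⟨h0, hN, hmt, ht⟩, hs⟩ := hv
      have hv0 : v = ((0 : ℤ), (0 : ℤ)) := by
        obtain ⟨v1, v2⟩ := v; simp_all; constructor <;> omega
      subst hv0
      exact ⟨[((0 : ℤ), (0 : ℤ))], rfl, rfl, List.isChain_singleton _⟩
  | succ n ih =>
      intro v hv hb
      by_cases hv0 : v = ((0 : ℤ), (0 : ℤ))
      · subst hv0
        exact ⟨[((0 : ℤ), (0 : ℤ))], rfl, rfl, List.isChain_singleton _⟩
      obtain ⟨v1, v2⟩ := v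
      obtain ⟨⟨h0, hN, hmt, ht⟩, hs⟩ := hv
      simp only at h0 hN hmt ht hs
      have hvx : ggVertex N t (v1, v2) := ⟨h0, hN, hmt, ht⟩
      have hne : ¬(v1 = 0 ∧ v2 = 0) := by
        intro ⟨a, b⟩; exact hv0 (by simp [a, b])
      -- choose a predecessor u with an edge u → (v1,v2)
      have : ∃ u : ℤ × ℤ, ggEdge N t u (v1, v2) ∧ Reachable N t u ∧
          (3 * u.1 + u.2).toNat ≤ n := by
        rcases lt_or_ge 0 v1 with hpos | hz
        · rcases lt_or_ge 0 (v1 + v2) with hsum | hsum0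
          · refine ⟨(v1 - 1, v2), ⟨⟨by omega, by omega, hmt, ht⟩, hvx, ?_⟩, ⟨⟨by omega, by omega, hmt, ht⟩, by omega⟩, by simp; omega⟩
            right; right; simp
          · -- v1 + v2 = 0, v2 < 0
            have hv2 : v2 = -v1 := by omega
            refine ⟨(v1 - 1, v2 + 1), ⟨⟨by omega, by omega, by omega, by omega⟩, hvx, ?_⟩, ⟨⟨by omega, by omega, by omega, by omega⟩, by omega⟩, by simp; omega⟩
            left; simp
        · have hv1 : v1 = 0 := by omega
          have hv2 : 0 < v2 := by omega
          refine ⟨(v1, v2 - 1), ⟨⟨by omega, by omega, by omega, by omega⟩, hvx, ?_⟩, ⟨⟨by omega, by omega, by omega, by omega⟩, by omega⟩, by simp; omega⟩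
          right; left; simp
      obtain ⟨u, he, hur, hm⟩ := this
      obtain ⟨l, hl⟩ := ih u hur hm
      exact ⟨l ++ [(v1, v2)], isPath_concat hl he⟩

lemma exists_path {v : ℤ × ℤ} (hv : Reachable N t v) :
    ∃ l, IsPath (ggEdge N t) ((0 : ℤ), (0 : ℤ)) v l :=
  exists_path_aux _ v hv le_rfl

lemma cost_attained {v : ℤ × ℤ} (hv : Reachable N t v) :
    ∃ l, IsPath (ggEdge N t) ((0 : ℤ), (0 : ℤ)) v l ∧ pathCost (ggWt w) l = ggCost N t w v := by
  have hne : {c | ∃ l, IsPath (ggEdge N t) ((0 : ℤ), (0 : ℤ)) v l ∧ pathCost (ggWt w) l = c}.Nonempty := by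
    obtain ⟨l, hl⟩ := exists_path hv
    exact ⟨_, l, hl, rfl⟩
  exact Nat.sInf_mem hne

lemma relax {u v : ℤ × ℤ} (hu : Reachable N t u) (he : ggEdge N t u v) :
    ggCost N t w v ≤ ggCost N t w u + ggWt w u v := by
  obtain ⟨l, hl, hc⟩ := cost_attained (w := w) hu
  have h2 := cost_le_path (ggWt w) (isPath_concat hl he)
  rwa [pathCost_concat _ l u v hl.2.1, hc] at h2

end Proofs
section Proofs2

variable {N t : ℕ} {w : ℤ → ℤ → ℕ}

lemma reach00 : Reachable N t ((0 : ℤ), (0 : ℤ)) := by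
  refine ⟨⟨le_refl _, by positivity, by simp, by positivity⟩, by simp⟩

lemma chainI (a d : ℤ) (ha : Reachable N t (a, d)) (haN : True) :
    ∀ j : ℕ, d + j ≤ (t : ℤ) → ggCost N t w (a, d + j) ≤ ggCost N t w (a, d) + j := by
  intro j
  induction j with
  | zero => simp
  | succ j ih =>
      intro hj
      obtain ⟨⟨h0, hN, hmt, ht⟩, hs⟩ := ha
      simp only at h0 hN hmt ht hs
      have hj' : d + (j : ℤ) ≤ (t : ℤ) := by push_cast at hj ⊢; omega
      have hr : Reachable N t (a, d + j) := ⟨⟨h0, hN, by omega, hj'⟩, by simp; omega⟩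
      have he : ggEdge N t (a, d + j) (a, d + (j + 1 : ℕ)) := by
        refine ⟨hr.1, ⟨h0, hN, by push_cast; omega, by push_cast; omega⟩, ?_⟩
        right; left; simp; push_cast; ring
      have hrel := relax (w := w) hr he
      have hwt : ggWt w (a, d + j) (a, d + (j + 1 : ℕ)) = 1 := by
        rw [ggWt, if_neg (by simp)]
      rw [hwt] at hrel
      calc ggCost N t w (a, d + (j + 1 : ℕ)) ≤ ggCost N t w (a, d + j) + 1 := hrel
        _ ≤ ggCost N t w (a, d) + j + 1 := by have := ih hj'; omega
        _ = ggCost N t w (a, d) + (j + 1 : ℕ) := by omega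

lemma chainD (a d : ℤ) (ha : Reachable N t (a, d)) :
    ∀ j : ℕ, a + j ≤ (N : ℤ) → -(t : ℤ) ≤ d - j →
      ggCost N t w (a + j, d - j) ≤ ggCost N t w (a, d) + j := by
  intro j
  induction j with
  | zero => simp
  | succ j ih =>
      intro hjN hjt
      obtain ⟨⟨h0, hN, hmt, ht⟩, hs⟩ := ha
      simp only at h0 hN hmt ht hs
      have hjN' : a + (j : ℤ) ≤ (N : ℤ) := by push_cast at hjN; omega
      have hjt' : -(t : ℤ) ≤ d - (j : ℤ) := by push_cast at hjt; omega
      have hr : Reachable N t (a + j, d - j) := ⟨⟨by omega, hjN', hjt', by omega⟩, by simp; omega⟩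
      have he : ggEdge N t (a + j, d - j) (a + (j + 1 : ℕ), d - (j + 1 : ℕ)) := by
        refine ⟨hr.1, ⟨by push_cast; omega, by push_cast at hjN ⊢; omega, by push_cast at hjt ⊢; omega, by push_cast; omega⟩, ?_⟩
        left; simp; push_cast; constructor <;> ring
      have hrel := relax (w := w) hr he
      have hwt : ggWt w (a + j, d - j) (a + (j + 1 : ℕ), d - (j + 1 : ℕ)) = 1 := by
        rw [ggWt, if_neg (by simp)]
      rw [hwt] at hrel
      calc ggCost N t w (a + (j + 1 : ℕ), d - (j + 1 : ℕ)) ≤ ggCost N t w (a + j, d - j) + 1 := hrel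
        _ ≤ ggCost N t w (a, d) + j + 1 := by have := ih hjN' hjt'; omega
        _ = ggCost N t w (a, d) + (j + 1 : ℕ) := by omega

lemma exists_min_pred {v : ℤ × ℤ} (hv : Reachable N t v) (hne : v ≠ ((0 : ℤ), (0 : ℤ))) :
    ∃ u, ggEdge N t u v ∧ Reachable N t u ∧ ggCost N t w u + ggWt w u v = ggCost N t w v := by
  obtain ⟨l, hl, hc⟩ := cost_attained (w := w) hv
  obtain ⟨h1, h2, h3⟩ := hl
  have hlne : l ≠ [] := by rintro rfl; simp at h1
  set l₀ := l.dropLast with hl₀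
  have hdec : l₀ ++ [v] = l := List.dropLast_append_getLast? v h2
  have hl₀ne : l₀ ≠ [] := by
    intro h
    rw [h] at hdec
    simp at hdec
    rw [← hdec] at h1
    simp only [List.head?_cons, Option.some.injEq] at h1
    exact hne h1
  obtain ⟨u, hu⟩ : ∃ u, l₀.getLast? = some u := by
    cases h : l₀.getLast? with
    | none => exact absurd (List.getLast?_eq_none_iff.mp h) hl₀ne
    | some u => exact ⟨u, rfl⟩
  have hch : List.Chain' (ggEdge N t) (l₀ ++ [v]) := by rw [hdec]; exact h3
  change List.IsChain _ _ at hch; rw [List.isChain_append] at hch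
  obtain ⟨hch₀, -, hedge⟩ := hch
  have he : ggEdge N t u v := hedge u (by rw [hu]; rfl) v rfl
  have hpath₀ : IsPath (ggEdge N t) ((0 : ℤ), (0 : ℤ)) u l₀ := by
    refine ⟨?_, hu, hch₀⟩
    rw [← hdec, List.head?_append_of_ne_nil _ hl₀ne] at h1
    exact h1
  have hur : Reachable N t u :=
    path_reach l₀ ((0 : ℤ), (0 : ℤ)) hch₀ hpath₀.1 reach00 u (List.mem_of_getLast? hu)
  have hle : ggCost N t w u ≤ pathCost (ggWt w) l₀ := cost_le_path _ hpath₀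
  have hrel : ggCost N t w v ≤ ggCost N t w u + ggWt w u v := relax hur he
  have hcost : pathCost (ggWt w) l = pathCost (ggWt w) l₀ + ggWt w u v := by
    rw [← hdec]; exact pathCost_concat _ l₀ u v hu
  exact ⟨u, he, hur, by omega⟩

end Proofs2
section Proofs3

variable {N t : ℕ} {w : ℤ → ℤ → ℕ}

lemma not_potent_cases {a b : ℤ} (h : ¬ Potent N t w (a, b)) :
    (DomL N t w (a, b) ∧ ¬ Potent N t w (a, b - 1)) ∨
    (DomL N t w (a, b) ∧ w (a + 1) (b - 1) ≠ 1) ∨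
    (DomU N t w (a, b) ∧ ¬ Potent N t w (a - 1, b + 1)) ∨
    (DomU N t w (a, b) ∧ w a (b + 1) ≠ 1) := by
  by_contra hc
  push_neg at hc
  obtain ⟨h1, h2, h3, h4⟩ := hc
  exact h (Potent.mk (a, b) h1 h2 h3 h4)

lemma potent_domL {a b : ℤ} (h : Potent N t w (a, b)) (hd : DomL N t w (a, b)) :
    Potent N t w (a, b - 1) := by
  cases h with | mk v hL _ _ _ => exact hL hd

lemma potent_domU {a b : ℤ} (h : Potent N t w (a, b)) (hd : DomU N t w (a, b)) :
    Potent N t w (a - 1, b + 1) := by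
  cases h with | mk v _ _ hU _ => exact hU hd

lemma descent1 (hw1 : ∀ i d, w i d ≤ 1) (v1 v2 : ℤ) (C : ℕ)
    (hv : Reachable N t (v1, v2))
    (huC : ggCost N t w (v1 - 1, v2) = C)
    (hxC : ggCost N t w (v1, v2 - 1) = C)
    (j0 : ℤ) (hj0 : 1 ≤ j0)
    (hr0 : Reachable N t (v1 - 1, v2 - j0))
    (hc0 : (ggCost N t w (v1 - 1, v2 - j0) : ℤ) + j0 = (C : ℤ))
    (hnp0 : ¬ Potent N t w (v1 - 1, v2 - j0)) : False := by
  obtain ⟨⟨hv1, hv2, hv3, hv4⟩, hv5⟩ := hv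
  simp only at hv1 hv2 hv3 hv4 hv5
  have step : ∀ j : ℤ, 1 ≤ j → Reachable N t (v1 - 1, v2 - j) →
      (ggCost N t w (v1 - 1, v2 - j) : ℤ) + j = (C : ℤ) →
      ¬ Potent N t w (v1 - 1, v2 - j) →
      (1 ≤ j + 1 ∧ Reachable N t (v1 - 1, v2 - (j + 1)) ∧
        (ggCost N t w (v1 - 1, v2 - (j + 1)) : ℤ) + (j + 1) = (C : ℤ) ∧
        ¬ Potent N t w (v1 - 1, v2 - (j + 1))) := by
    intro j hj hr hc hnp
    have hpair : ((v1 - 1 : ℤ), v2 - (j + 1)) = ((v1 - 1 : ℤ), v2 - j - 1) := by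
      rw [sub_add_eq_sub_sub]
    rcases not_potent_cases hnp with ⟨hdL, hnpL⟩ | ⟨hdL, hwL⟩ | ⟨hdU, -⟩ | ⟨hdU, -⟩
    -- Case 1: recurse
    · have hq : Reachable N t (v1 - 1, v2 - j - 1) := hdL.2.1
      have hqc : ggCost N t w (v1 - 1, v2 - j - 1) + 1 = ggCost N t w (v1 - 1, v2 - j) :=
        hdL.2.2
      refine ⟨by omega, ?_, ?_, ?_⟩
      · rw [hpair]; exact hq
      · rw [hpair]; omega
      · rw [hpair]; exact hnpL
    -- Case 2: w (v1) (v2 - j - 1) = 0, contradiction with cost x = C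
    · exfalso
      have hq : Reachable N t (v1 - 1, v2 - j - 1) := hdL.2.1
      have hqc : ggCost N t w (v1 - 1, v2 - j - 1) + 1 = ggCost N t w (v1 - 1, v2 - j) :=
        hdL.2.2
      obtain ⟨⟨hq1, hq2, hq3, hq4⟩, hq5⟩ := hq
      simp only at hq1 hq2 hq3 hq4 hq5
      have hw0' : w v1 (v2 - j - 1) = 0 := by
        have h1 := hw1 v1 (v2 - j - 1)
        rw [show v1 - 1 + 1 = v1 by ring] at hwL
        omega
      have he : ggEdge N t (v1 - 1, v2 - j - 1) (v1, v2 - j - 1) := by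
        refine ⟨⟨hq1, hq2, hq3, hq4⟩, ⟨by omega, hv2, hq3, hq4⟩, ?_⟩
        right; right; simp [Prod.ext_iff] <;> omega
      have hrel := relax (w := w) ⟨⟨hq1, hq2, hq3, hq4⟩, hq5⟩ he
      have hwt : ggWt w (v1 - 1, v2 - j - 1) (v1, v2 - j - 1) = 0 := by
        rw [ggWt, if_pos (by simp [Prod.ext_iff] <;> omega)]
        exact hw0'
      rw [hwt] at hrel
      have hreach2 : Reachable N t (v1, v2 - j - 1) := ⟨⟨by omega, hv2, hq3, hq4⟩, by simp; omega⟩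
      have hchain := chainI (w := w) v1 (v2 - j - 1) hreach2 trivial j.toNat
        (by push_cast; omega)
      rw [show (v2 - j - 1 + (j.toNat : ℤ)) = v2 - 1 by omega] at hchain
      omega
    -- Case 3 & 4: DomU, contradiction with cost u = C
    all_goals {
      exfalso
      have hp : Reachable N t (v1 - 1 - 1, v2 - j + 1) := hdU.2.1
      have hpc : ggCost N t w (v1 - 1 - 1, v2 - j + 1) + 1 = ggCost N t w (v1 - 1, v2 - j) :=
        hdU.2.2
      obtain ⟨⟨hp1, hp2, hp3, hp4⟩, hp5⟩ := hp
      simp only at hp1 hp2 hp3 hp4 hp5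
      have hchain := chainI (w := w) (v1 - 1 - 1) (v2 - j + 1)
        ⟨⟨hp1, hp2, hp3, hp4⟩, hp5⟩ trivial (j - 1).toNat (by push_cast; omega)
      rw [show (v2 - j + 1 + ((j - 1).toNat : ℤ)) = v2 by omega] at hchain
      have he : ggEdge N t (v1 - 1 - 1, v2) (v1 - 1, v2) := by
        refine ⟨⟨hp1, hp2, hv3, hv4⟩, ⟨by omega, by omega, hv3, hv4⟩, ?_⟩
        right; right; simp [Prod.ext_iff]
      have hrel := relax (w := w) ⟨⟨hp1, hp2, hv3, hv4⟩, by simp; omega⟩ he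
      have hwt : ggWt w (v1 - 1 - 1, v2) (v1 - 1, v2) ≤ 1 := by
        rw [ggWt]
        split
        · exact hw1 _ _
        · exact le_refl 1
      omega
    }
  -- iterate the step
  have iter : ∀ k : ℕ, 1 ≤ j0 + k ∧ Reachable N t (v1 - 1, v2 - (j0 + k)) ∧
      (ggCost N t w (v1 - 1, v2 - (j0 + k)) : ℤ) + (j0 + k) = (C : ℤ) ∧
      ¬ Potent N t w (v1 - 1, v2 - (j0 + k)) := by
    intro k
    induction k with
    | zero => simpa using ⟨hj0, hr0, hc0, hnp0⟩
    | succ k ih =>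
        obtain ⟨ih1, ih2, ih3, ih4⟩ := ih
        have := step (j0 + k) ih1 ih2 ih3 ih4
        rwa [show (j0 + (k : ℤ)) + 1 = j0 + ((k : ℕ) + 1 : ℕ) by push_cast; ring] at this
  obtain ⟨hk1, hk2, -, -⟩ := iter (v2 + t).toNat
  obtain ⟨⟨-, -, hk3, -⟩, -⟩ := hk2
  simp only at hk3
  omega

end Proofs3
section Proofs4

variable {N t : ℕ} {w : ℤ → ℤ → ℕ}

lemma descent2 (hw1 : ∀ i d, w i d ≤ 1) (v1 v2 : ℤ) (C : ℕ)
    (hv : Reachable N t (v1, v2))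
    (huC : ggCost N t w (v1 - 1, v2) = C)
    (hyC : ggCost N t w (v1 - 1, v2 + 1) = C)
    (j0 : ℤ) (hj0 : 1 ≤ j0)
    (hr0 : Reachable N t (v1 - 1 - j0, v2 + j0))
    (hc0 : (ggCost N t w (v1 - 1 - j0, v2 + j0) : ℤ) + j0 = (C : ℤ))
    (hnp0 : ¬ Potent N t w (v1 - 1 - j0, v2 + j0)) : False := by
  obtain ⟨⟨hv1, hv2, hv3, hv4⟩, hv5⟩ := hv
  simp only at hv1 hv2 hv3 hv4 hv5
  have step : ∀ j : ℤ, 1 ≤ j → Reachable N t (v1 - 1 - j, v2 + j) →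
      (ggCost N t w (v1 - 1 - j, v2 + j) : ℤ) + j = (C : ℤ) →
      ¬ Potent N t w (v1 - 1 - j, v2 + j) →
      (1 ≤ j + 1 ∧ Reachable N t (v1 - 1 - (j + 1), v2 + (j + 1)) ∧
        (ggCost N t w (v1 - 1 - (j + 1), v2 + (j + 1)) : ℤ) + (j + 1) = (C : ℤ) ∧
        ¬ Potent N t w (v1 - 1 - (j + 1), v2 + (j + 1))) := by
    intro j hj hr hc hnp
    obtain ⟨⟨hr1, hr2, hr3, hr4⟩, hr5⟩ := hr
    simp only at hr1 hr2 hr3 hr4 hr5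
    have hpair : ((v1 - 1 - (j + 1) : ℤ), v2 + (j + 1)) = ((v1 - 1 - j - 1 : ℤ), v2 + j + 1) := by
      simp [Prod.ext_iff]; constructor <;> ring
    rcases not_potent_cases hnp with ⟨hdL, -⟩ | ⟨hdL, -⟩ | ⟨hdU, hnpU⟩ | ⟨hdU, hwU⟩
    -- Cases 1 & 2: DomL, contradiction with cost u = C
    all_goals try {
      exfalso
      have hq : Reachable N t (v1 - 1 - j, v2 + j - 1) := hdL.2.1
      have hqc : ggCost N t w (v1 - 1 - j, v2 + j - 1) + 1 = ggCost N t w (v1 - 1 - j, v2 + j) :=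
        hdL.2.2
      have hchain := chainD (w := w) (v1 - 1 - j) (v2 + j - 1) hq (j - 1).toNat
        (by push_cast; omega) (by push_cast; omega)
      rw [show (v1 - 1 - j + ((j - 1).toNat : ℤ)) = v1 - 2 by omega,
        show (v2 + j - 1 - ((j - 1).toNat : ℤ)) = v2 by omega] at hchain
      obtain ⟨⟨hq1, hq2, hq3, hq4⟩, hq5⟩ := hq
      simp only at hq1 hq2 hq3 hq4 hq5
      have he : ggEdge N t (v1 - 2, v2) (v1 - 1, v2) := by
        refine ⟨⟨by omega, by omega, hv3, hv4⟩, ⟨by omega, by omega, hv3, hv4⟩, ?_⟩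
        right; right; simp [Prod.ext_iff] <;> omega
      have hrel := relax (w := w) ⟨⟨by omega, by omega, hv3, hv4⟩, by simp; omega⟩ he
      have hwt : ggWt w (v1 - 2, v2) (v1 - 1, v2) ≤ 1 := by
        rw [ggWt]; split
        · exact hw1 _ _
        · exact le_refl 1
      omega
    }
    -- Case 3: recurse
    · have hp : Reachable N t (v1 - 1 - j - 1, v2 + j + 1) := hdU.2.1
      have hpc : ggCost N t w (v1 - 1 - j - 1, v2 + j + 1) + 1 =
          ggCost N t w (v1 - 1 - j, v2 + j) := hdU.2.2
      refine ⟨by omega, ?_, ?_, ?_⟩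
      · rw [hpair]; exact hp
      · rw [hpair]; omega
      · rw [hpair]; exact hnpU
    -- Case 4: w (v1-1-j) (v2+j+1) = 0, contradiction with cost y = C
    · exfalso
      have hp : Reachable N t (v1 - 1 - j - 1, v2 + j + 1) := hdU.2.1
      have hpc : ggCost N t w (v1 - 1 - j - 1, v2 + j + 1) + 1 =
          ggCost N t w (v1 - 1 - j, v2 + j) := hdU.2.2
      obtain ⟨⟨hp1, hp2, hp3, hp4⟩, hp5⟩ := hp
      simp only at hp1 hp2 hp3 hp4 hp5
      have hw0' : w (v1 - 1 - j) (v2 + j + 1) = 0 := by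
        have h1 := hw1 (v1 - 1 - j) (v2 + j + 1)
        omega
      have he : ggEdge N t (v1 - 1 - j - 1, v2 + j + 1) (v1 - 1 - j, v2 + j + 1) := by
        refine ⟨⟨hp1, hp2, hp3, hp4⟩, ⟨by omega, by omega, hp3, hp4⟩, ?_⟩
        right; right; simp [Prod.ext_iff] <;> omega
      have hrel := relax (w := w) ⟨⟨hp1, hp2, hp3, hp4⟩, hp5⟩ he
      have hwt : ggWt w (v1 - 1 - j - 1, v2 + j + 1) (v1 - 1 - j, v2 + j + 1) = 0 := by
        rw [ggWt, if_pos (by simp [Prod.ext_iff] <;> omega)]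
        exact hw0'
      rw [hwt] at hrel
      have hreach2 : Reachable N t (v1 - 1 - j, v2 + j + 1) :=
        ⟨⟨by omega, by omega, hp3, hp4⟩, by simp; omega⟩
      have hchain := chainD (w := w) (v1 - 1 - j) (v2 + j + 1) hreach2 j.toNat
        (by push_cast; omega) (by push_cast; omega)
      rw [show (v1 - 1 - j + (j.toNat : ℤ)) = v1 - 1 by omega,
        show (v2 + j + 1 - (j.toNat : ℤ)) = v2 + 1 by omega] at hchain
      omega
  -- iterate the step
  have iter : ∀ k : ℕ, 1 ≤ j0 + k ∧ Reachable N t (v1 - 1 - (j0 + k), v2 + (j0 + k)) ∧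
      (ggCost N t w (v1 - 1 - (j0 + k), v2 + (j0 + k)) : ℤ) + (j0 + k) = (C : ℤ) ∧
      ¬ Potent N t w (v1 - 1 - (j0 + k), v2 + (j0 + k)) := by
    intro k
    induction k with
    | zero => simpa using ⟨hj0, hr0, hc0, hnp0⟩
    | succ k ih =>
        obtain ⟨ih1, ih2, ih3, ih4⟩ := ih
        have := step (j0 + k) ih1 ih2 ih3 ih4
        rwa [show (j0 + (k : ℤ)) + 1 = j0 + ((k : ℕ) + 1 : ℕ) by push_cast; ring] at this
  obtain ⟨hk1, hk2, -, -⟩ := iter v1.toNat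
  obtain ⟨⟨hk3, -, -, -⟩, -⟩ := hk2
  simp only at hk3
  omega

end Proofs4
section Proofs5

variable {N t : ℕ} {w : ℤ → ℤ → ℕ}

lemma lemP (hw1 : ∀ i d, w i d ≤ 1) (v1 v2 : ℤ) (hv : Reachable N t (v1, v2))
    (hp : Potent N t w (v1, v2)) (hne : ((v1, v2) : ℤ × ℤ) ≠ ((0 : ℤ), (0 : ℤ))) :
    ∃ u, ggEdge N t u (v1, v2) ∧ Reachable N t u ∧ Potent N t w u ∧
      ggCost N t w u + ggWt w u (v1, v2) = ggCost N t w (v1, v2) := by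
  obtain ⟨u, he, hur, hcu⟩ := exists_min_pred (w := w) hv hne
  obtain ⟨u1, u2⟩ := u
  have hcase := he.2.2
  have hvert := he.1
  rcases hcase with h1 | h2 | h3
  · -- deletion edge: u = (v1 - 1, v2 + 1)
    simp only [Prod.mk.injEq] at h1
    have hu1 : u1 = v1 - 1 := by omega
    have hu2 : u2 = v2 + 1 := by omega
    subst hu1; subst hu2
    have hwt : ggWt w (v1 - 1, v2 + 1) (v1, v2) = 1 := by
      rw [ggWt, if_neg (by simp [Prod.ext_iff] <;> omega)]
    rw [hwt] at hcu
    have hd : DomU N t w (v1, v2) := ⟨hv, hur, hcu⟩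
    exact ⟨(v1 - 1, v2 + 1), he, hur, potent_domU hp hd, by rw [hwt]; exact hcu⟩
  · -- insertion edge: u = (v1, v2 - 1)
    simp only [Prod.mk.injEq] at h2
    obtain ⟨h2a, h2b⟩ := h2
    subst h2a
    have hu2 : u2 = v2 - 1 := by omega
    subst hu2
    have hwt : ggWt w (v1, v2 - 1) (v1, v2) = 1 := by
      rw [ggWt, if_neg (by simp [Prod.ext_iff] <;> omega)]
    rw [hwt] at hcu
    have hd : DomL N t w (v1, v2) := ⟨hv, hur, hcu⟩
    exact ⟨(v1, v2 - 1), he, hur, potent_domL hp hd, by rw [hwt]; exact hcu⟩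
  · -- vertical edge: u = (v1 - 1, v2)
    simp only [Prod.mk.injEq] at h3
    obtain ⟨h3a, h3b⟩ := h3
    subst h3b
    have hu1 : u1 = v1 - 1 := by omega
    subst hu1
    have hwt : ggWt w (v1 - 1, v2) (v1, v2) = w v1 v2 := by
      rw [ggWt, if_pos (by simp [Prod.ext_iff] <;> omega)]
    rw [hwt] at hcu
    by_cases hup : Potent N t w (v1 - 1, v2)
    · exact ⟨(v1 - 1, v2), he, hur, hup, by rw [hwt]; exact hcu⟩
    obtain ⟨⟨hva, hvb, hvc, hvd⟩, hve⟩ := hv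
    simp only at hva hvb hvc hvd hve
    have hv' : Reachable N t (v1, v2) := ⟨⟨hva, hvb, hvc, hvd⟩, hve⟩
    have hwv : w v1 v2 ≤ 1 := hw1 _ _
    rcases not_potent_cases hup with ⟨hdL, hnpL⟩ | ⟨hdL, hwL⟩ | ⟨hdU, hnpU⟩ | ⟨hdU, hwU⟩
    · -- DomL of u, with non-potent (v1-1, v2-1)
      have hq : Reachable N t (v1 - 1, v2 - 1) := hdL.2.1
      have hqc : ggCost N t w (v1 - 1, v2 - 1) + 1 = ggCost N t w (v1 - 1, v2) := hdL.2.2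
      obtain ⟨⟨hq1, hq2, hq3, hq4⟩, hq5⟩ := hq
      simp only at hq1 hq2 hq3 hq4 hq5
      have hxvert : ggVertex N t (v1, v2 - 1) := ⟨by omega, hvb, hq3, hq4⟩
      have hxr : Reachable N t (v1, v2 - 1) := ⟨hxvert, by simp; omega⟩
      have he1 : ggEdge N t (v1 - 1, v2 - 1) (v1, v2 - 1) :=
        ⟨⟨hq1, hq2, hq3, hq4⟩, hxvert, Or.inr (Or.inr (by simp [Prod.ext_iff] <;> omega))⟩
      have hrel1 := relax (w := w) ⟨⟨hq1, hq2, hq3, hq4⟩, hq5⟩ he1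
      have hwt1 : ggWt w (v1 - 1, v2 - 1) (v1, v2 - 1) = w v1 (v2 - 1) := by
        rw [ggWt, if_pos (by simp [Prod.ext_iff] <;> omega)]
      rw [hwt1] at hrel1
      have hwx : w v1 (v2 - 1) ≤ 1 := hw1 _ _
      have he2 : ggEdge N t (v1, v2 - 1) (v1, v2) :=
        ⟨hxvert, ⟨hva, hvb, hvc, hvd⟩, Or.inr (Or.inl (by simp [Prod.ext_iff] <;> omega))⟩
      have hwt2 : ggWt w (v1, v2 - 1) (v1, v2) = 1 := by
        rw [ggWt, if_neg (by simp [Prod.ext_iff] <;> omega)]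
      have hrel2 := relax (w := w) hxr he2
      rw [hwt2] at hrel2
      by_cases hx1 : ggCost N t w (v1, v2 - 1) + 1 = ggCost N t w (v1, v2)
      · have hd : DomL N t w (v1, v2) := ⟨hv', hxr, hx1⟩
        exact ⟨(v1, v2 - 1), he2, hxr, potent_domL hp hd, by rw [hwt2]; exact hx1⟩
      · exfalso
        have huC : ggCost N t w (v1 - 1, v2) = ggCost N t w (v1, v2) := by omega
        have hxC : ggCost N t w (v1, v2 - 1) = ggCost N t w (v1, v2) := by omega
        exact descent1 hw1 v1 v2 (ggCost N t w (v1, v2)) hv' huC hxC 1 le_rfl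
          (by norm_num; exact ⟨⟨hq1, hq2, hq3, hq4⟩, hq5⟩)
          (by push_cast; norm_num; omega)
          (by norm_num; exact hnpL)
    · -- DomL of u, with missing mismatch : w v1 (v2-1) = 0
      have hq : Reachable N t (v1 - 1, v2 - 1) := hdL.2.1
      have hqc : ggCost N t w (v1 - 1, v2 - 1) + 1 = ggCost N t w (v1 - 1, v2) := hdL.2.2
      obtain ⟨⟨hq1, hq2, hq3, hq4⟩, hq5⟩ := hq
      simp only at hq1 hq2 hq3 hq4 hq5
      have hw0' : w v1 (v2 - 1) = 0 := by
        have h1 := hw1 v1 (v2 - 1)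
        rw [show v1 - 1 + 1 = v1 by ring] at hwL
        omega
      have hxvert : ggVertex N t (v1, v2 - 1) := ⟨by omega, hvb, hq3, hq4⟩
      have hxr : Reachable N t (v1, v2 - 1) := ⟨hxvert, by simp; omega⟩
      have he1 : ggEdge N t (v1 - 1, v2 - 1) (v1, v2 - 1) :=
        ⟨⟨hq1, hq2, hq3, hq4⟩, hxvert, Or.inr (Or.inr (by simp [Prod.ext_iff] <;> omega))⟩
      have hrel1 := relax (w := w) ⟨⟨hq1, hq2, hq3, hq4⟩, hq5⟩ he1
      have hwt1 : ggWt w (v1 - 1, v2 - 1) (v1, v2 - 1) = 0 := by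
        rw [ggWt, if_pos (by simp [Prod.ext_iff] <;> omega)]
        exact hw0'
      rw [hwt1] at hrel1
      have he2 : ggEdge N t (v1, v2 - 1) (v1, v2) :=
        ⟨hxvert, ⟨hva, hvb, hvc, hvd⟩, Or.inr (Or.inl (by simp [Prod.ext_iff] <;> omega))⟩
      have hwt2 : ggWt w (v1, v2 - 1) (v1, v2) = 1 := by
        rw [ggWt, if_neg (by simp [Prod.ext_iff] <;> omega)]
      have hrel2 := relax (w := w) hxr he2
      rw [hwt2] at hrel2
      have hx1 : ggCost N t w (v1, v2 - 1) + 1 = ggCost N t w (v1, v2) := by omega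
      have hd : DomL N t w (v1, v2) := ⟨hv', hxr, hx1⟩
      exact ⟨(v1, v2 - 1), he2, hxr, potent_domL hp hd, by rw [hwt2]; exact hx1⟩
    · -- DomU of u, with non-potent (v1-2, v2+1)
      have hq : Reachable N t (v1 - 1 - 1, v2 + 1) := hdU.2.1
      have hqc : ggCost N t w (v1 - 1 - 1, v2 + 1) + 1 = ggCost N t w (v1 - 1, v2) := hdU.2.2
      obtain ⟨⟨hq1, hq2, hq3, hq4⟩, hq5⟩ := hq
      simp only at hq1 hq2 hq3 hq4 hq5
      have hyvert : ggVertex N t (v1 - 1, v2 + 1) := ⟨by omega, by omega, by omega, hq4⟩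
      have hyr : Reachable N t (v1 - 1, v2 + 1) := ⟨hyvert, by simp; omega⟩
      have he1 : ggEdge N t (v1 - 1 - 1, v2 + 1) (v1 - 1, v2 + 1) :=
        ⟨⟨hq1, hq2, hq3, hq4⟩, hyvert, Or.inr (Or.inr (by simp [Prod.ext_iff] <;> omega))⟩
      have hrel1 := relax (w := w) ⟨⟨hq1, hq2, hq3, hq4⟩, hq5⟩ he1
      have hwt1 : ggWt w (v1 - 1 - 1, v2 + 1) (v1 - 1, v2 + 1) = w (v1 - 1) (v2 + 1) := by
        rw [ggWt, if_pos (by simp [Prod.ext_iff] <;> omega)]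
      rw [hwt1] at hrel1
      have hwy : w (v1 - 1) (v2 + 1) ≤ 1 := hw1 _ _
      have he2 : ggEdge N t (v1 - 1, v2 + 1) (v1, v2) :=
        ⟨hyvert, ⟨hva, hvb, hvc, hvd⟩, Or.inl (by simp [Prod.ext_iff] <;> omega)⟩
      have hwt2 : ggWt w (v1 - 1, v2 + 1) (v1, v2) = 1 := by
        rw [ggWt, if_neg (by simp [Prod.ext_iff] <;> omega)]
      have hrel2 := relax (w := w) hyr he2
      rw [hwt2] at hrel2
      by_cases hy1 : ggCost N t w (v1 - 1, v2 + 1) + 1 = ggCost N t w (v1, v2)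
      · have hd : DomU N t w (v1, v2) := ⟨hv', hyr, hy1⟩
        exact ⟨(v1 - 1, v2 + 1), he2, hyr, potent_domU hp hd, by rw [hwt2]; exact hy1⟩
      · exfalso
        have huC : ggCost N t w (v1 - 1, v2) = ggCost N t w (v1, v2) := by omega
        have hyC : ggCost N t w (v1 - 1, v2 + 1) = ggCost N t w (v1, v2) := by omega
        exact descent2 hw1 v1 v2 (ggCost N t w (v1, v2)) hv' huC hyC 1 le_rfl
          (by norm_num; exact ⟨⟨hq1, hq2, hq3, hq4⟩, hq5⟩)
          (by push_cast; norm_num; omega)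
          (by norm_num; exact hnpU)
    · -- DomU of u, with missing mismatch : w (v1-1) (v2+1) = 0
      have hq : Reachable N t (v1 - 1 - 1, v2 + 1) := hdU.2.1
      have hqc : ggCost N t w (v1 - 1 - 1, v2 + 1) + 1 = ggCost N t w (v1 - 1, v2) := hdU.2.2
      obtain ⟨⟨hq1, hq2, hq3, hq4⟩, hq5⟩ := hq
      simp only at hq1 hq2 hq3 hq4 hq5
      have hw0' : w (v1 - 1) (v2 + 1) = 0 := by
        have h1 := hw1 (v1 - 1) (v2 + 1)
        omega
      have hyvert : ggVertex N t (v1 - 1, v2 + 1) := ⟨by omega, by omega, by omega, hq4⟩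
      have hyr : Reachable N t (v1 - 1, v2 + 1) := ⟨hyvert, by simp; omega⟩
      have he1 : ggEdge N t (v1 - 1 - 1, v2 + 1) (v1 - 1, v2 + 1) :=
        ⟨⟨hq1, hq2, hq3, hq4⟩, hyvert, Or.inr (Or.inr (by simp [Prod.ext_iff] <;> omega))⟩
      have hrel1 := relax (w := w) ⟨⟨hq1, hq2, hq3, hq4⟩, hq5⟩ he1
      have hwt1 : ggWt w (v1 - 1 - 1, v2 + 1) (v1 - 1, v2 + 1) = 0 := by
        rw [ggWt, if_pos (by simp [Prod.ext_iff] <;> omega)]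
        exact hw0'
      rw [hwt1] at hrel1
      have he2 : ggEdge N t (v1 - 1, v2 + 1) (v1, v2) :=
        ⟨hyvert, ⟨hva, hvb, hvc, hvd⟩, Or.inl (by simp [Prod.ext_iff] <;> omega)⟩
      have hwt2 : ggWt w (v1 - 1, v2 + 1) (v1, v2) = 1 := by
        rw [ggWt, if_neg (by simp [Prod.ext_iff] <;> omega)]
      have hrel2 := relax (w := w) hyr he2
      rw [hwt2] at hrel2
      have hy1 : ggCost N t w (v1 - 1, v2 + 1) + 1 = ggCost N t w (v1, v2) := by omega
      have hd : DomU N t w (v1, v2) := ⟨hv', hyr, hy1⟩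
      exact ⟨(v1 - 1, v2 + 1), he2, hyr, potent_domU hp hd, by rw [hwt2]; exact hy1⟩

end Proofs5
section Proofs6

variable {N t : ℕ} {w : ℤ → ℤ → ℕ}

lemma potent00 : Potent N t w ((0 : ℤ), (0 : ℤ)) := by
  refine Potent.mk _ ?_ ?_ ?_ ?_ <;> intro hd <;> exfalso
  · obtain ⟨-, hs⟩ := hd.2.1; norm_num at hs
  · obtain ⟨-, hs⟩ := hd.2.1; norm_num at hs
  · obtain ⟨⟨h1, -⟩, -⟩ := hd.2.1; norm_num at h1
  · obtain ⟨⟨h1, -⟩, -⟩ := hd.2.1; norm_num at h1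

lemma cost00 : ggCost N t w ((0 : ℤ), (0 : ℤ)) = 0 := by
  have h : IsPath (ggEdge N t) ((0 : ℤ), (0 : ℤ)) ((0 : ℤ), (0 : ℤ)) [((0 : ℤ), (0 : ℤ))] :=
    ⟨rfl, rfl, List.isChain_singleton _⟩
  exact Nat.le_zero.mp (cost_le_path (ggWt w) h)

lemma lemA (hw1 : ∀ i d, w i d ≤ 1) :
    ∀ n : ℕ, ∀ v : ℤ × ℤ, Reachable N t v → Potent N t w v → (3 * v.1 + v.2).toNat ≤ n →
      ∃ l, IsPath (ggEdge N t) ((0 : ℤ), (0 : ℤ)) v l ∧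
        pathCost (ggWt w) l = ggCost N t w v ∧ ∀ u ∈ l, Potent N t w u := by
  intro n
  induction n with
  | zero =>
      intro v hv hp hb
      obtain ⟨⟨h0, hN, hmt, ht⟩, hs⟩ := hv
      have hv0 : v = ((0 : ℤ), (0 : ℤ)) := by
        obtain ⟨v1, v2⟩ := v; simp_all; constructor <;> omega
      subst hv0
      exact ⟨[((0 : ℤ), (0 : ℤ))], ⟨rfl, rfl, List.isChain_singleton _⟩, by rw [cost00]; rfl,
        by intro u hu; simp at hu; subst hu; exact potent00⟩
  | succ n ih =>
      intro v hv hp hb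
      by_cases hv0 : v = ((0 : ℤ), (0 : ℤ))
      · subst hv0
        exact ⟨[((0 : ℤ), (0 : ℤ))], ⟨rfl, rfl, List.isChain_singleton _⟩, by rw [cost00]; rfl,
          by intro u hu; simp at hu; subst hu; exact potent00⟩
      obtain ⟨v1, v2⟩ := v
      obtain ⟨u, he, hur, hpu, hcu⟩ := lemP hw1 v1 v2 hv hp hv0
      have hm : (3 * u.1 + u.2).toNat ≤ n := by
        obtain ⟨u1, u2⟩ := u
        have hs := hur.2
        simp only at hs ⊢
        rcases he.2.2 with h | h | h <;> simp only [Prod.mk.injEq] at h <;>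
          simp only at hb <;> omega
      obtain ⟨l, hl, hcost, hpot⟩ := ih u hur hpu hm
      refine ⟨l ++ [(v1, v2)], isPath_concat hl he, ?_, ?_⟩
      · rw [pathCost_concat _ l u _ hl.2.1, hcost, hcu]
      · intro x hx
        rcases List.mem_append.mp hx with hx | hx
        · exact hpot x hx
        · simp at hx; subst hx; exact hp

end Proofs6
theorem stmt2 (N t : ℕ) (w : ℤ → ℤ → ℕ)
    (hw1 : ∀ i d, w i d ≤ 1)
    (hw0 : ∀ i d : ℤ, ¬(1 ≤ i ∧ i ≤ (N : ℤ) ∧ -(t : ℤ) ≤ d ∧ d ≤ (t : ℤ)) → w i d = 0)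
    (v : ℤ × ℤ) (hv : Reachable N t v) :
    ∃ l : List (ℤ × ℤ), IsPath (ggEdge N t) (0, 0) v l ∧
      pathCost (ggWt w) l = ggCost N t w v ∧
      ∃ k : ℕ, 1 ≤ k ∧ (∀ u ∈ l.take k, Potent N t w u) ∧
        ∀ u ∈ l.drop k, ¬ Potent N t w u := by
  have potent_case : ∀ v' : ℤ × ℤ, Reachable N t v' → Potent N t w v' →
      ∃ l, IsPath (ggEdge N t) ((0 : ℤ), (0 : ℤ)) v' l ∧
        pathCost (ggWt w) l = ggCost N t w v' ∧
        ∃ k, 1 ≤ k ∧ k ≤ l.length ∧ (∀ u ∈ l.take k, Potent N t w u) ∧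
          ∀ u ∈ l.drop k, ¬ Potent N t w u := by
    intro v' hv' hp
    obtain ⟨l, hl, hc, hall⟩ := lemA hw1 (3 * v'.1 + v'.2).toNat v' hv' hp le_rfl
    have hne : l ≠ [] := by rintro rfl; simp [IsPath] at hl
    refine ⟨l, hl, hc, l.length, List.length_pos_iff.mpr hne, le_rfl, ?_, ?_⟩
    · intro u hu; exact hall u (by simpa using hu)
    · simp
  have main : ∀ n : ℕ, ∀ v' : ℤ × ℤ, Reachable N t v' → (3 * v'.1 + v'.2).toNat ≤ n →
      ∃ l, IsPath (ggEdge N t) ((0 : ℤ), (0 : ℤ)) v' l ∧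
        pathCost (ggWt w) l = ggCost N t w v' ∧
        ∃ k, 1 ≤ k ∧ k ≤ l.length ∧ (∀ u ∈ l.take k, Potent N t w u) ∧
          ∀ u ∈ l.drop k, ¬ Potent N t w u := by
    intro n
    induction n with
    | zero =>
        intro v' hv' hb
        obtain ⟨⟨h0, hN, hmt, ht⟩, hs⟩ := hv'
        have hv0 : v' = ((0 : ℤ), (0 : ℤ)) := by
          obtain ⟨v1, v2⟩ := v'; simp_all; constructor <;> omega
        subst hv0
        exact potent_case _ reach00 potent00
    | succ n ih =>
        intro v' hv' hb
        by_cases hp : Potent N t w v'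
        · exact potent_case v' hv' hp
        have hv0 : v' ≠ ((0 : ℤ), (0 : ℤ)) := fun h => hp (h ▸ potent00)
        obtain ⟨u, he, hur, hcu⟩ := exists_min_pred (w := w) hv' hv0
        have hm : (3 * u.1 + u.2).toNat ≤ n := by
          obtain ⟨u1, u2⟩ := u
          obtain ⟨v1, v2⟩ := v'
          have hs := hur.2
          simp only at hs ⊢
          rcases he.2.2 with h | h | h <;> simp only [Prod.mk.injEq] at h <;>
            simp only at hb <;> omega
        obtain ⟨l, hl, hc, k, hk1, hkle, hpk, hnk⟩ := ih u hur hm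
        refine ⟨l ++ [v'], isPath_concat hl he, ?_, k, hk1, ?_, ?_, ?_⟩
        · rw [pathCost_concat _ l u _ hl.2.1, hc, hcu]
        · simp; omega
        · rw [List.take_append_of_le_length hkle]; exact hpk
        · rw [List.drop_append_of_le_length hkle]
          intro x hx
          rcases List.mem_append.mp hx with hx | hx
          · exact hnk x hx
          · simp at hx; subst hx; exact hp
  obtain ⟨l, hl, hc, k, hk1, -, hpk, hnk⟩ := main (3 * v.1 + v.2).toNat v hv le_rfl
  exact ⟨l, hl, hc, k, hk1, hpk, hnk⟩

end Stmt2
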